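/- Let T > 0, let X be a locally compact Polish space, let ν be a Borel measure on X that is finite on compact sets, and let ν_T = λ_T ⊗ ν on [0,T] × X, where λ_T is Lebesgue measure on [0,T]. Fix N ∈ ℕ, a compact set K ⊆ X, and a measurable function h : [0,T] × X → ℝ such that ∫_{[0,T]×K} e^{L·|h(s,v)|} ν_T(ds dv) < ∞ for every L > 0. Then for any sequence (g_n) in S^N, lim_{M → ∞} sup_n ∫_{([0,T]×K) ∩ {|h| ≥ M}} |h(s,v)|·g_n(s,v) ν_T(ds dv) = 0. -/

import Mathlib

open MeasureTheory Set
open scoped ENNReal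

/-- `l(r) = r·log r − r + 1` (note `Real.log 0 = 0` in Mathlib, so `ell 0 = 1`). -/
noncomputable def ell (r : ℝ) : ℝ := r * Real.log r - r + 1

/-- `ν_T = λ_T ⊗ ν` on `[0,T] × X`. -/
noncomputable def nuT {X : Type*} [MeasurableSpace X] (T : ℝ) (ν : Measure X) :
    Measure (ℝ × X) := (volume.restrict (Icc 0 T)).prod ν

lemma ell_nonneg {r : ℝ} (hr : 0 ≤ r) : 0 ≤ ell r := by
  rcases eq_or_lt_of_le hr with h | h
  · simp [ell, ← h]
  · have h1 : Real.log (1 / r) ≤ 1 / r - 1 := Real.log_le_sub_one_of_pos (by positivity)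
    rw [Real.log_div one_ne_zero (ne_of_gt h), Real.log_one] at h1
    unfold ell
    have h2 : r * (1/r) = 1 := by field_simp
    nlinarith [mul_le_mul_of_nonneg_left h1 h.le]

lemma young (x : ℝ) {y : ℝ} (hy : 0 ≤ y) : x * y ≤ Real.exp x + ell y := by
  rcases eq_or_lt_of_le hy with h | h
  · simp [ell, ← h]; positivity
  · have h1 : (x - Real.log y) + 1 ≤ Real.exp (x - Real.log y) := Real.add_one_le_exp _
    rw [Real.exp_sub, Real.exp_log h] at h1
    unfold ell
    have h2 : y * (Real.exp x / y) = Real.exp x := by field_simp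
    nlinarith [mul_le_mul_of_nonneg_left h1 h.le]

lemma measurable_ell : Measurable ell := by
  unfold ell
  exact ((measurable_id.mul Real.measurable_log).sub measurable_id).add measurable_const


/-- Uniform (over a sequence in `S^N`) vanishing of the contribution of
large values of `h` on `[0,T] × K`:
`lim_{M → ∞} sup_n ∫_{([0,T]×K) ∩ {|h| ≥ M}} |h|·g_n dν_T = 0`. -/
theorem uniform_truncation_vanishing
    (T : ℝ) (hT : 0 < T)
    {X : Type*} [TopologicalSpace X] [PolishSpace X] [LocallyCompactSpace X]
    [MeasurableSpace X] [BorelSpace X]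
    (ν : Measure X) [IsFiniteMeasureOnCompacts ν]
    (N : ℕ) (K : Set X) (hK : IsCompact K)
    (h : ℝ × X → ℝ) (hmeas : Measurable h)
    (hexpK : ∀ L : ℝ, 0 < L →
      ∫⁻ p in (univ : Set ℝ) ×ˢ K, ENNReal.ofReal (Real.exp (L * |h p|)) ∂(nuT T ν) < ⊤)
    (gn : ℕ → ℝ × X → ℝ)
    (hgnmeas : ∀ n, Measurable (gn n)) (hgnnonneg : ∀ n p, 0 ≤ gn n p)
    (hgnS : ∀ n, ∫⁻ p, ENNReal.ofReal (ell (gn n p)) ∂(nuT T ν) ≤ (N : ℝ≥0∞)) :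
    Filter.Tendsto
      (fun M : ℝ => ⨆ n : ℕ,
        ∫⁻ p in ((univ : Set ℝ) ×ˢ K) ∩ {p : ℝ × X | M ≤ |h p|},
          ENNReal.ofReal (|h p| * gn n p) ∂(nuT T ν))
      Filter.atTop (nhds 0) := by
  rw [ENNReal.tendsto_nhds_zero]
  intro ε hε
  obtain ⟨δ, hδ0, hδε⟩ : ∃ δ : ℝ, 0 < δ ∧ ENNReal.ofReal δ ≤ ε := by
    rcases le_or_gt 1 ε with hh | hh
    · exact ⟨1, one_pos, by simpa using hh⟩
    · have hεt : ε ≠ ⊤ := (hh.trans ENNReal.one_lt_top).ne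
      exact ⟨ε.toReal, ENNReal.toReal_pos hε.ne' hεt,
        le_of_eq (ENNReal.ofReal_toReal hεt)⟩
  set L : ℝ := ((N : ℝ) + 1) / δ with hLdef
  have hL0 : 0 < L := by positivity
  set C : ℝ≥0∞ := ∫⁻ p in (univ : Set ℝ) ×ˢ K,
      ENNReal.ofReal (Real.exp ((2*L) * |h p|)) ∂(nuT T ν) with hCdef
  have hCfin : C < ⊤ := hexpK (2*L) (by positivity)
  -- key uniform bound
  have key : ∀ M : ℝ, ∀ n : ℕ,
      ∫⁻ p in ((univ : Set ℝ) ×ˢ K) ∩ {p : ℝ × X | M ≤ |h p|},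
        ENNReal.ofReal (|h p| * gn n p) ∂(nuT T ν)
      ≤ ENNReal.ofReal (1/L) * (ENNReal.ofReal (Real.exp (-(L*M))) * C + N) := by
    intro M n
    set A := ((univ : Set ℝ) ×ˢ K) ∩ {p : ℝ × X | M ≤ |h p|} with hA
    have hmeasExp : Measurable fun p : ℝ × X =>
        ENNReal.ofReal (Real.exp (-(L*M)) * Real.exp ((2*L) * |h p|)) :=
      ENNReal.measurable_ofReal.comp
        (measurable_const.mul (Real.measurable_exp.comp (measurable_const.mul hmeas.abs)))
    have hmeasEll : Measurable fun p : ℝ × X => ENNReal.ofReal (ell (gn n p)) :=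
      ENNReal.measurable_ofReal.comp (measurable_ell.comp (hgnmeas n))
    have step1 : ∫⁻ p in A, ENNReal.ofReal (|h p| * gn n p) ∂(nuT T ν)
        ≤ ∫⁻ p in A, ENNReal.ofReal (1/L) *
            (ENNReal.ofReal (Real.exp (-(L*M)) * Real.exp ((2*L) * |h p|))
              + ENNReal.ofReal (ell (gn n p))) ∂(nuT T ν) := by
      refine setLIntegral_mono ((hmeasExp.add hmeasEll).const_mul _) ?_
      intro p hp
      have hMp : M ≤ |h p| := hp.2
      have hy := hgnnonneg n p
      have h1 : (L * |h p|) * gn n p ≤ Real.exp (L * |h p|) + ell (gn n p) := young _ hy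
      have h2 : Real.exp (L * |h p|) ≤ Real.exp (-(L*M)) * Real.exp ((2*L) * |h p|) := by
        rw [← Real.exp_add]
        apply Real.exp_le_exp.2
        nlinarith [abs_nonneg (h p)]
      have h3 : |h p| * gn n p ≤ (1/L) *
          (Real.exp (-(L*M)) * Real.exp ((2*L) * |h p|) + ell (gn n p)) := by
        have h4 : (L * |h p|) * gn n p
            ≤ Real.exp (-(L*M)) * Real.exp ((2*L) * |h p|) + ell (gn n p) := by linarith
        calc |h p| * gn n p = (1/L) * ((L * |h p|) * gn n p) := by field_simp
          _ ≤ _ := mul_le_mul_of_nonneg_left h4 (by positivity)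
      calc ENNReal.ofReal (|h p| * gn n p)
          ≤ ENNReal.ofReal ((1/L) * (Real.exp (-(L*M)) * Real.exp ((2*L) * |h p|)
              + ell (gn n p))) := ENNReal.ofReal_le_ofReal h3
        _ = _ := by
            rw [ENNReal.ofReal_mul (by positivity),
              ENNReal.ofReal_add (by positivity) (ell_nonneg hy)]
    have step2 : ∫⁻ p in A, ENNReal.ofReal (1/L) *
            (ENNReal.ofReal (Real.exp (-(L*M)) * Real.exp ((2*L) * |h p|))
              + ENNReal.ofReal (ell (gn n p))) ∂(nuT T ν)
        = ENNReal.ofReal (1/L) *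
            ((∫⁻ p in A, ENNReal.ofReal (Real.exp (-(L*M)) * Real.exp ((2*L) * |h p|)) ∂(nuT T ν))
              + ∫⁻ p in A, ENNReal.ofReal (ell (gn n p)) ∂(nuT T ν)) := by
      rw [lintegral_const_mul' _ _ ENNReal.ofReal_ne_top, lintegral_add_left hmeasExp]
    have step3 : (∫⁻ p in A, ENNReal.ofReal (Real.exp (-(L*M)) * Real.exp ((2*L) * |h p|)) ∂(nuT T ν))
        ≤ ENNReal.ofReal (Real.exp (-(L*M))) * C := by
      have : ∀ p : ℝ × X, ENNReal.ofReal (Real.exp (-(L*M)) * Real.exp ((2*L) * |h p|))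
          = ENNReal.ofReal (Real.exp (-(L*M))) * ENNReal.ofReal (Real.exp ((2*L) * |h p|)) :=
        fun p => ENNReal.ofReal_mul (Real.exp_nonneg _)
      simp_rw [this]
      rw [lintegral_const_mul' _ _ ENNReal.ofReal_ne_top]
      exact mul_le_mul_right (lintegral_mono_set inter_subset_left) _
    have step4 : (∫⁻ p in A, ENNReal.ofReal (ell (gn n p)) ∂(nuT T ν)) ≤ (N : ℝ≥0∞) :=
      (setLIntegral_le_lintegral _ _).trans (hgnS n)
    calc _ ≤ _ := step1
      _ = _ := step2
      _ ≤ ENNReal.ofReal (1/L) * (ENNReal.ofReal (Real.exp (-(L*M))) * C + N) :=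
          mul_le_mul_right (add_le_add step3 step4) _
  -- eventual control of the exponential term
  set c : ℝ := C.toReal with hcdef
  have hc0 : 0 ≤ c := ENNReal.toReal_nonneg
  have hev : ∀ᶠ M in Filter.atTop, Real.exp (-(L*M)) * c ≤ 1 := by
    have htend : Filter.Tendsto (fun M : ℝ => Real.exp (-(L*M))) Filter.atTop (nhds 0) := by
      apply Real.tendsto_exp_atBot.comp
      have : Filter.Tendsto (fun M : ℝ => L * M) Filter.atTop Filter.atTop :=
        Filter.Tendsto.const_mul_atTop hL0 Filter.tendsto_id
      exact Filter.tendsto_neg_atBot_iff.2 this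
    have hlt : (0:ℝ) < 1 / (c + 1) := by positivity
    filter_upwards [htend.eventually_lt_const hlt] with M hM
    have : Real.exp (-(L*M)) * c ≤ (1/(c+1)) * c :=
      mul_le_mul_of_nonneg_right hM.le hc0
    calc Real.exp (-(L*M)) * c ≤ (1/(c+1)) * c := this
      _ ≤ 1 := by rw [div_mul_eq_mul_div, one_mul, div_le_one (by positivity)]; linarith
  filter_upwards [hev] with M hM
  refine iSup_le fun n => (key M n).trans ?_
  have hbd : ENNReal.ofReal (Real.exp (-(L*M))) * C ≤ 1 := by
    calc ENNReal.ofReal (Real.exp (-(L*M))) * C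
        = ENNReal.ofReal (Real.exp (-(L*M))) * ENNReal.ofReal c := by
          rw [hcdef, ENNReal.ofReal_toReal hCfin.ne]
      _ = ENNReal.ofReal (Real.exp (-(L*M)) * c) := (ENNReal.ofReal_mul (Real.exp_nonneg _)).symm
      _ ≤ ENNReal.ofReal 1 := ENNReal.ofReal_le_ofReal hM
      _ = 1 := ENNReal.ofReal_one
  calc ENNReal.ofReal (1/L) * (ENNReal.ofReal (Real.exp (-(L*M))) * C + N)
      ≤ ENNReal.ofReal (1/L) * (1 + N) := mul_le_mul_right (add_le_add_left hbd _) _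
    _ = ENNReal.ofReal (1/L) * ENNReal.ofReal ((N:ℝ) + 1) := by
        rw [ENNReal.ofReal_add (by positivity) zero_le_one, ENNReal.ofReal_natCast,
          ENNReal.ofReal_one, add_comm]
    _ = ENNReal.ofReal ((1/L) * ((N:ℝ) + 1)) := (ENNReal.ofReal_mul (by positivity)).symm
    _ = ENNReal.ofReal δ := by
        congr 1
        rw [hLdef]
        field_simp
    _ ≤ ε := hδε
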